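/- With the convention P_{−1} = 0, for every integer w ≥ 0 and every real x one has x·P_w(x) = A_w·P_{w−1}(x) + B_w·P_w(x) + C_w·P_{w+1}(x), where A_w = [[(n+w)(p+w−1)(n−p+w+1)/((p+w)(n−p+w)(2w+n+1)), 0],[0, (n+w)(p+w+1)(n−p+w−1)/((p+w)(n−p+w)(2w+n+1))]], B_w = [[0, −p/((p+w)(p+w+1))],[−(n−p)/((n−p+w)(n−p+w+1)), 0]], and C_w = ((w+1)/(2w+n+1))·Id. -/

import Mathlib

open scoped BigOperators Matrix

noncomputable section

/-- Gegenbauer polynomials `C_k^lam` with natural number index, defined by the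
three-term recurrence. -/
def Geg (lam : ℝ) : ℕ → ℝ → ℝ
  | 0 => fun _ => 1
  | 1 => fun x => 2 * lam * x
  | (k + 2) => fun x =>
      (2 * ((k : ℝ) + 2 + lam - 1) * x * Geg lam (k + 1) x
        - ((k : ℝ) + 2 + 2 * lam - 2) * Geg lam k x) / ((k : ℝ) + 2)

/-- Gegenbauer polynomials with integer index, equal to `0` for negative index. -/
def GegZ (lam : ℝ) (k : ℤ) (x : ℝ) : ℝ :=
  if k < 0 then 0 else Geg lam k.toNat x

/-- The 2×2 matrix valued polynomials `P_w`. -/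
def Pw (p n : ℝ) (w : ℕ) (x : ℝ) : Matrix (Fin 2) (Fin 2) ℂ :=
  !![(((1 / (n + 1)) * GegZ ((n + 1) / 2) (w : ℤ) x
        + (1 / (p + w)) * GegZ ((n + 3) / 2) ((w : ℤ) - 2) x : ℝ) : ℂ),
     (((1 / (p + w)) * GegZ ((n + 3) / 2) ((w : ℤ) - 1) x : ℝ) : ℂ);
     (((1 / (n - p + w)) * GegZ ((n + 3) / 2) ((w : ℤ) - 1) x : ℝ) : ℂ),
     (((1 / (n + 1)) * GegZ ((n + 1) / 2) (w : ℤ) x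
        + (1 / (n - p + w)) * GegZ ((n + 3) / 2) ((w : ℤ) - 2) x : ℝ) : ℂ)]

/-- The weight matrix `W_{p,n}` on `(-1,1)`. -/
def Wmat (p n : ℝ) (x : ℝ) : Matrix (Fin 2) (Fin 2) ℂ :=
  (((1 - x ^ 2) ^ (n / 2 - 1) : ℝ) : ℂ) •
    !![((p * x ^ 2 + n - p : ℝ) : ℂ), ((-(n * x) : ℝ) : ℂ);
       ((-(n * x) : ℝ) : ℂ), (((n - p) * x ^ 2 + p : ℝ) : ℂ)]

/-- Entrywise derivative of a matrix valued function. -/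
def mderiv (P : ℝ → Matrix (Fin 2) (Fin 2) ℂ) : ℝ → Matrix (Fin 2) (Fin 2) ℂ :=
  fun x => Matrix.of fun i j => deriv (fun t => P t i j) x

/-- The matrix valued inner product `⟨P,Q⟩ = ∫_{-1}^{1} P(x) W(x) Q(x)^* dx`. -/
def mint (p n : ℝ) (P Q : ℝ → Matrix (Fin 2) (Fin 2) ℂ) : Matrix (Fin 2) (Fin 2) ℂ :=
  Matrix.of fun i j => ∫ x in (-1 : ℝ)..1, (P x * Wmat p n x * (Q x)ᴴ) i j

/-- A matrix valued function is polynomial if each entry is given by a polynomial. -/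
def IsPolyMat (P : ℝ → Matrix (Fin 2) (Fin 2) ℂ) : Prop :=
  ∀ i j, ∃ q : Polynomial ℂ, ∀ x : ℝ, P x i j = q.eval (x : ℂ)


/-- `P_w` for integer index, with the convention `P_{-1} = 0`. -/
def PwZ (p n : ℝ) (w : ℤ) (x : ℝ) : Matrix (Fin 2) (Fin 2) ℂ :=
  if w < 0 then 0 else Pw p n w.toNat x

lemma GegZ_neg (lam : ℝ) {k : ℤ} (x : ℝ) (h : k < 0) : GegZ lam k x = 0 := if_pos h

lemma GegZ_ofNat (lam : ℝ) (m : ℕ) (x : ℝ) : GegZ lam (m : ℤ) x = Geg lam m x := by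
  simp [GegZ]

lemma recZ (lam : ℝ) (k : ℤ) (x : ℝ) :
    (k : ℝ) * GegZ lam k x
      = 2 * ((k : ℝ) + lam - 1) * x * GegZ lam (k - 1) x
        - ((k : ℝ) + 2 * lam - 2) * GegZ lam (k - 2) x := by
  rcases lt_trichotomy k 0 with h | h | h
  · rw [GegZ_neg lam x h, GegZ_neg lam x (by omega), GegZ_neg lam x (by omega)]; ring
  · subst h
    rw [GegZ_neg lam x (by norm_num : (0:ℤ)-1 < 0), GegZ_neg lam x (by norm_num : (0:ℤ)-2 < 0)]
    norm_num
  · have : k = 1 ∨ 2 ≤ k := by omega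
    rcases this with rfl | h2
    · rw [show (1:ℤ)-1 = ((0:ℕ):ℤ) by norm_num, show (1:ℤ) = ((1:ℕ):ℤ) by norm_num,
        GegZ_ofNat, GegZ_ofNat, GegZ_neg lam x (by norm_num : ((1:ℕ):ℤ)-2 < 0)]
      simp [Geg]
    · obtain ⟨m, rfl⟩ : ∃ m : ℕ, k = (m : ℤ) + 2 := ⟨(k-2).toNat, by omega⟩
      rw [show ((m:ℤ)+2) = ((m+2:ℕ):ℤ) by push_cast; ring,
          show ((m+2:ℕ):ℤ)-1 = ((m+1:ℕ):ℤ) by push_cast; ring,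
          show ((m+2:ℕ):ℤ)-2 = ((m:ℕ):ℤ) by push_cast; ring,
          GegZ_ofNat, GegZ_ofNat, GegZ_ofNat]
      have hm : ((m:ℝ) + 2) ≠ 0 := by positivity
      simp only [Geg]
      push_cast
      field_simp

lemma contigN (lam : ℝ) (hl : 0 < lam) (x : ℝ) :
    ∀ m : ℕ, ((m : ℝ) + lam) * GegZ lam (m : ℤ) x
      = lam * (GegZ (lam + 1) (m : ℤ) x - GegZ (lam + 1) ((m : ℤ) - 2) x)
  | 0 => by
    rw [GegZ_ofNat, GegZ_ofNat, GegZ_neg _ x (by norm_num : ((0:ℕ):ℤ)-2 < 0)]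
    simp [Geg]
  | 1 => by
    rw [GegZ_ofNat, GegZ_ofNat, GegZ_neg _ x (by norm_num : ((1:ℕ):ℤ)-2 < 0)]
    simp [Geg]; ring
  | (m + 2) => by
    have ih1 := contigN lam hl x (m + 1)
    have ih2 := contigN lam hl x m
    have hE1 := recZ lam ((m : ℤ) + 2) x
    have hE2 := recZ (lam + 1) ((m : ℤ) + 2) x
    have hE3 := recZ (lam + 1) (m : ℤ) x
    simp only [show ((m:ℤ)+2)-1 = (m:ℤ)+1 from by ring,
      show ((m:ℤ)+2)-2 = (m:ℤ) from by ring] at hE1 hE2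
    push_cast at ih1 ih2 hE1 hE2 hE3 ⊢
    simp only [show ((m:ℤ)+1)-2 = (m:ℤ)-1 from by ring] at ih1
    simp only [show ((m:ℤ)+2)-2 = (m:ℤ) from by ring] at hE1 hE2 ⊢
    have hD : ((m:ℝ)+2)*((m:ℝ)+1+lam)*((m:ℝ)+lam) ≠ 0 := by positivity
    apply mul_left_cancel₀ hD
    linear_combination
      (((m:ℝ)+lam)*((m:ℝ)+1+lam)*((m:ℝ)+2+lam)) * hE1
      + (-lam*((m:ℝ)+lam)*((m:ℝ)+1+lam)) * hE2
      + (lam*((m:ℝ)+1+lam)*((m:ℝ)+2+lam)) * hE3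
      + (2*x*((m:ℝ)+lam)*((m:ℝ)+1+lam)*((m:ℝ)+2+lam)) * ih1
      + (-((m:ℝ)+1+lam)*((m:ℝ)+2+lam)*((m:ℝ)+2*lam)) * ih2

lemma contigZ (lam : ℝ) (hl : 0 < lam) (k : ℤ) (x : ℝ) :
    ((k : ℝ) + lam) * GegZ lam k x
      = lam * (GegZ (lam + 1) k x - GegZ (lam + 1) (k - 2) x) := by
  rcases lt_or_ge k 0 with h | h
  · rw [GegZ_neg lam x h, GegZ_neg (lam+1) x h, GegZ_neg (lam+1) x (by omega)]; ring
  · obtain ⟨m, rfl⟩ : ∃ m : ℕ, k = (m : ℤ) := ⟨k.toNat, by omega⟩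
    exact contigN lam hl x m

set_option maxHeartbeats 1000000 in
lemma entryA (n q r : ℝ) (hq : 0 < q) (hr : 0 < r) (hn : n = q + r)
    (w : ℤ) (hw : 1 ≤ w) (x : ℝ) :
    x * ((1/(n+1)) * GegZ ((n+1)/2) w x + (1/(q+(w:ℝ))) * GegZ ((n+3)/2) (w-2) x)
      = (n+(w:ℝ)) * (q+(w:ℝ)-1) * (r+(w:ℝ)+1) / ((q+(w:ℝ)) * (r+(w:ℝ)) * (2*(w:ℝ)+n+1))
          * ((1/(n+1)) * GegZ ((n+1)/2) (w-1) x + (1/(q+(w:ℝ)-1)) * GegZ ((n+3)/2) (w-3) x)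
        + (-q / ((q+(w:ℝ)) * (q+(w:ℝ)+1))) * ((1/(r+(w:ℝ))) * GegZ ((n+3)/2) (w-1) x)
        + ((w:ℝ)+1)/(2*(w:ℝ)+n+1)
            * ((1/(n+1)) * GegZ ((n+1)/2) (w+1) x + (1/(q+(w:ℝ)+1)) * GegZ ((n+3)/2) (w-1) x) := by
  have hw' : (1:ℝ) ≤ (w:ℝ) := by exact_mod_cast hw
  set W := (w:ℝ) with hW
  have hlam : 0 < (n+1)/2 := by rw [hn]; linarith
  have hn1 : n+1 ≠ 0 := by rw [hn]; positivity
  have hQ : q+W ≠ 0 := by linarith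
  have hQm : q+W-1 ≠ 0 := by linarith
  have hQp : q+W+1 ≠ 0 := by linarith
  have hR0 : r+W ≠ 0 := by linarith
  have hS : 2*W+n+1 ≠ 0 := by rw [hn]; linarith
  have hT : 2*W+n-1 ≠ 0 := by rw [hn]; linarith
  have hR1 := recZ ((n+1)/2) (w+1) x
  have hR2 := recZ ((n+3)/2) (w-1) x
  have hC2 := contigZ ((n+1)/2) hlam (w-1) x
  rw [show (n+1)/2+1 = (n+3)/2 from by ring] at hC2
  simp only [show (w:ℤ)+1-1 = w from by ring, show (w:ℤ)+1-2 = w-1 from by ring] at hR1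
  simp only [show (w:ℤ)-1-1 = w-2 from by ring, show (w:ℤ)-1-2 = w-3 from by ring] at hR2 hC2
  push_cast at hR1 hR2 hC2
  rw [← hW] at hR1 hR2 hC2
  set G1 := GegZ ((n+1)/2) (w+1) x
  set G0 := GegZ ((n+1)/2) w x
  set Gm := GegZ ((n+1)/2) (w-1) x
  set Hm1 := GegZ ((n+3)/2) (w-1) x
  set Hm2 := GegZ ((n+3)/2) (w-2) x
  set Hm3 := GegZ ((n+3)/2) (w-3) x
  have h1 : (n+W) * (q+W-1) * (r+W+1) / ((q+W) * (r+W) * (2*W+n+1))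
          * ((1/(n+1)) * Gm + (1/(q+W-1)) * Hm3)
      = ((n+W)*(r+W+1)*(q+W-1)^2*(q+W+1)*(2*W+n-1)*Gm
          + (n+W)*(r+W+1)*(n+1)*(q+W-1)*(q+W+1)*(2*W+n-1)*Hm3)
        / ((n+1)*(q+W)*(q+W-1)*(q+W+1)*(r+W)*(2*W+n+1)*(2*W+n-1)) := by
    rw [div_mul_eq_mul_div, div_eq_div_iff (by simp [hQ, hR0, hS]) (by simp [hn1, hQ, hQm, hQp, hR0, hS, hT])]
    field_simp
  have h2 : (-q / ((q+W) * (q+W+1))) * ((1/(r+W)) * Hm1)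
      = (-(q*(n+1)*(q+W-1)*(2*W+n+1)*(2*W+n-1)*Hm1))
        / ((n+1)*(q+W)*(q+W-1)*(q+W+1)*(r+W)*(2*W+n+1)*(2*W+n-1)) := by
    rw [eq_div_iff (by simp [hn1, hQ, hQm, hQp, hR0, hS, hT])]
    field_simp
  have h3 : (W+1)/(2*W+n+1) * ((1/(n+1)) * G1 + (1/(q+W+1)) * Hm1)
      = ((W+1)*(q+W)*(q+W-1)*(q+W+1)*(r+W)*(2*W+n-1)*G1
          + (W+1)*(n+1)*(q+W)*(q+W-1)*(r+W)*(2*W+n-1)*Hm1)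
        / ((n+1)*(q+W)*(q+W-1)*(q+W+1)*(r+W)*(2*W+n+1)*(2*W+n-1)) := by
    rw [div_mul_eq_mul_div, div_eq_div_iff (by simp [hS]) (by simp [hn1, hQ, hQm, hQp, hR0, hS, hT])]
    field_simp
  have hL : x * ((1/(n+1)) * G0 + (1/(q+W)) * Hm2)
      = (x * ((q+W)*(q+W-1)*(q+W+1)*(r+W)*(2*W+n+1)*(2*W+n-1)*G0
          + (n+1)*(q+W-1)*(q+W+1)*(r+W)*(2*W+n+1)*(2*W+n-1)*Hm2))
        / ((n+1)*(q+W)*(q+W-1)*(q+W+1)*(r+W)*(2*W+n+1)*(2*W+n-1)) := by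
    rw [eq_div_iff (by simp [hn1, hQ, hQm, hQp, hR0, hS, hT])]
    field_simp
  have key : x * ((q+W)*(q+W-1)*(q+W+1)*(r+W)*(2*W+n+1)*(2*W+n-1)*G0
          + (n+1)*(q+W-1)*(q+W+1)*(r+W)*(2*W+n+1)*(2*W+n-1)*Hm2)
      = ((n+W)*(r+W+1)*(q+W-1)^2*(q+W+1)*(2*W+n-1)*Gm
          + (n+W)*(r+W+1)*(n+1)*(q+W-1)*(q+W+1)*(2*W+n-1)*Hm3)
        + (-(q*(n+1)*(q+W-1)*(2*W+n+1)*(2*W+n-1)*Hm1))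
        + ((W+1)*(q+W)*(q+W-1)*(q+W+1)*(r+W)*(2*W+n-1)*G1
          + (W+1)*(n+1)*(q+W)*(q+W-1)*(r+W)*(2*W+n-1)*Hm1) := by
    subst hn
    linear_combination (-(q+W)*(q+W-1)*(q+W+1)*(r+W)*(2*W+(q+r)-1)) * hR1
      + (-((q+r)+1)*(q+W-1)*(q+W+1)*(r+W)*(2*W+(q+r)+1)) * hR2
      + (2*(W+(q+r))*(r-q+1)*(q+W-1)*(q+W+1)) * hC2
  rw [hL, key, add_div, add_div, h1, h2, h3]

set_option maxHeartbeats 1000000 in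
lemma entryB (n q r : ℝ) (hq : 0 < q) (hr : 0 < r) (hn : n = q + r)
    (w : ℤ) (hw : 1 ≤ w) (x : ℝ) :
    x * ((1/(q+(w:ℝ))) * GegZ ((n+3)/2) (w-1) x)
      = (n+(w:ℝ)) * (q+(w:ℝ)-1) * (r+(w:ℝ)+1) / ((q+(w:ℝ)) * (r+(w:ℝ)) * (2*(w:ℝ)+n+1))
          * ((1/(q+(w:ℝ)-1)) * GegZ ((n+3)/2) (w-2) x)
        + (-q / ((q+(w:ℝ)) * (q+(w:ℝ)+1)))
            * ((1/(n+1)) * GegZ ((n+1)/2) w x + (1/(r+(w:ℝ))) * GegZ ((n+3)/2) (w-2) x)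
        + ((w:ℝ)+1)/(2*(w:ℝ)+n+1) * ((1/(q+(w:ℝ)+1)) * GegZ ((n+3)/2) w x) := by
  have hw' : (1:ℝ) ≤ (w:ℝ) := by exact_mod_cast hw
  set W := (w:ℝ) with hW
  have hlam : 0 < (n+1)/2 := by rw [hn]; linarith
  have hn1 : n+1 ≠ 0 := by rw [hn]; positivity
  have hQ : q+W ≠ 0 := by linarith
  have hQm : q+W-1 ≠ 0 := by linarith
  have hQp : q+W+1 ≠ 0 := by linarith
  have hR0 : r+W ≠ 0 := by linarith
  have hS : 2*W+n+1 ≠ 0 := by rw [hn]; linarith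
  have hR3 := recZ ((n+3)/2) w x
  have hC0 := contigZ ((n+1)/2) hlam w x
  rw [show (n+1)/2+1 = (n+3)/2 from by ring] at hC0
  push_cast at hR3 hC0
  rw [← hW] at hR3 hC0
  set H0 := GegZ ((n+3)/2) w x
  set G0 := GegZ ((n+1)/2) w x
  set Hm1 := GegZ ((n+3)/2) (w-1) x
  set Hm2 := GegZ ((n+3)/2) (w-2) x
  have h1 : (n+W) * (q+W-1) * (r+W+1) / ((q+W) * (r+W) * (2*W+n+1))
          * ((1/(q+W-1)) * Hm2)
      = ((n+W)*(r+W+1)*(n+1)*(q+W-1)*(q+W+1)*Hm2)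
        / ((n+1)*(q+W)*(q+W-1)*(q+W+1)*(r+W)*(2*W+n+1)) := by
    field_simp
  have h2 : (-q / ((q+W) * (q+W+1))) * ((1/(n+1)) * G0 + (1/(r+W)) * Hm2)
      = (-(q*(q+W-1)*(r+W)*(2*W+n+1)*G0) - q*(n+1)*(q+W-1)*(2*W+n+1)*Hm2)
        / ((n+1)*(q+W)*(q+W-1)*(q+W+1)*(r+W)*(2*W+n+1)) := by
    rw [eq_div_iff (by simp [hn1, hQ, hQm, hQp, hR0, hS])]
    field_simp
    ring
  have h3 : (W+1)/(2*W+n+1) * ((1/(q+W+1)) * H0)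
      = ((W+1)*(n+1)*(q+W)*(q+W-1)*(r+W)*H0)
        / ((n+1)*(q+W)*(q+W-1)*(q+W+1)*(r+W)*(2*W+n+1)) := by
    field_simp
  have hL : x * ((1/(q+W)) * Hm1)
      = (x * ((n+1)*(q+W-1)*(q+W+1)*(r+W)*(2*W+n+1)*Hm1))
        / ((n+1)*(q+W)*(q+W-1)*(q+W+1)*(r+W)*(2*W+n+1)) := by
    rw [eq_div_iff (by simp [hn1, hQ, hQm, hQp, hR0, hS])]
    field_simp
  have key : x * ((n+1)*(q+W-1)*(q+W+1)*(r+W)*(2*W+n+1)*Hm1)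
      = ((n+W)*(r+W+1)*(n+1)*(q+W-1)*(q+W+1)*Hm2)
        + (-(q*(q+W-1)*(r+W)*(2*W+n+1)*G0) - q*(n+1)*(q+W-1)*(2*W+n+1)*Hm2)
        + ((W+1)*(n+1)*(q+W)*(q+W-1)*(r+W)*H0) := by
    subst hn
    linear_combination (-((q+r)+1)*(q+W-1)*(q+W+1)*(r+W)) * hR3
      + (2*q*(q+W-1)*(r+W)) * hC0
  rw [hL, key, add_div, add_div, h1, h2, h3]

lemma PwZ_neg (p n : ℝ) {k : ℤ} (x : ℝ) (h : k < 0) : PwZ p n k x = 0 := if_pos h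

lemma PwZ_eq (p n : ℝ) (k : ℤ) (x : ℝ) :
    PwZ p n k x =
      !![(((1 / (n + 1)) * GegZ ((n + 1) / 2) k x
            + (1 / (p + (k:ℝ))) * GegZ ((n + 3) / 2) (k - 2) x : ℝ) : ℂ),
         (((1 / (p + (k:ℝ))) * GegZ ((n + 3) / 2) (k - 1) x : ℝ) : ℂ);
         (((1 / (n - p + (k:ℝ))) * GegZ ((n + 3) / 2) (k - 1) x : ℝ) : ℂ),
         (((1 / (n + 1)) * GegZ ((n + 1) / 2) k x
            + (1 / (n - p + (k:ℝ))) * GegZ ((n + 3) / 2) (k - 2) x : ℝ) : ℂ)] := by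
  rcases k with m | m
  · rw [show (Int.ofNat m) = ((m:ℕ):ℤ) from rfl]
    rw [PwZ, if_neg (by omega), Int.toNat_natCast, Pw]
    push_cast
    rfl
  · rw [PwZ_neg p n x (Int.negSucc_lt_zero m)]
    have h1 : (Int.negSucc m) < 0 := Int.negSucc_lt_zero m
    ext i j
    fin_cases i <;> fin_cases j <;>
      simp [GegZ_neg ((n+1)/2) x h1, GegZ_neg ((n+3)/2) x (Int.negSucc_lt_zero (m+1)),
        GegZ_neg ((n+3)/2) x (Int.negSucc_lt_zero (m+2)),
        GegZ_neg ((n+3)/2) x (show Int.negSucc m - 2 < 0 by omega),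
        GegZ_neg ((n+3)/2) x (show Int.negSucc m - 1 < 0 by omega)]

set_option maxHeartbeats 1600000 in
/-- the three-term recursion relation
`x P_w(x) = A_w P_{w-1}(x) + B_w P_w(x) + C_w P_{w+1}(x)`. -/
theorem statement8 (p n : ℝ) (hp : 0 < p) (hpn : p < n) (w : ℕ) (x : ℝ) :
    (x : ℂ) • Pw p n w x
      = !![(((n + w) * (p + w - 1) * (n - p + w + 1) /
              ((p + w) * (n - p + w) * (2 * w + n + 1)) : ℝ) : ℂ), 0;
           0, (((n + w) * (p + w + 1) * (n - p + w - 1) /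
              ((p + w) * (n - p + w) * (2 * w + n + 1)) : ℝ) : ℂ)]
          * PwZ p n ((w : ℤ) - 1) x
        + !![0, ((-p / ((p + w) * (p + w + 1)) : ℝ) : ℂ);
             ((-(n - p) / ((n - p + w) * (n - p + w + 1)) : ℝ) : ℂ), 0]
          * Pw p n w x
        + (((w + 1) / (2 * w + n + 1) : ℝ) : ℂ) • Pw p n (w + 1) x := by
  have hn : 0 < n := hp.trans hpn
  have hnp : 0 < n - p := by linarith
  rcases Nat.eq_zero_or_pos w with rfl | hw1
  · -- w = 0
    have hz : PwZ p n (((0:ℕ) : ℤ) - 1) x = 0 := PwZ_neg p n x (by norm_num)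
    rw [hz]
    have hn1 : (n:ℝ) + 1 ≠ 0 := by positivity
    have hp1 : (p:ℝ) + 1 ≠ 0 := by positivity
    have hnp1 : n - p + 1 ≠ 0 := by positivity
    have hp0 : (p:ℝ) ≠ 0 := ne_of_gt hp
    have hnp0 : n - p ≠ 0 := ne_of_gt hnp
    ext i j
    fin_cases i <;> fin_cases j <;>
      simp [Pw, Matrix.mul_apply, Fin.sum_univ_two, smul_eq_mul, GegZ, Geg,
        show ((0:ℕ):ℤ) - 2 < 0 by norm_num, show ((0:ℕ):ℤ) - 1 < 0 by norm_num,
        show ((1:ℕ):ℤ) - 2 < 0 by norm_num]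
    all_goals
      have hn1' : (n:ℂ) + 1 ≠ 0 := by exact_mod_cast Complex.ofReal_ne_zero.mpr hn1
      have hp1' : (p:ℂ) + 1 ≠ 0 := by exact_mod_cast Complex.ofReal_ne_zero.mpr hp1
      have hnp1' : (n:ℂ) - p + 1 ≠ 0 := by exact_mod_cast Complex.ofReal_ne_zero.mpr hnp1
      have hp0' : (p:ℂ) ≠ 0 := Complex.ofReal_ne_zero.mpr hp0
      have hnp0' : (n:ℂ) - p ≠ 0 := by exact_mod_cast Complex.ofReal_ne_zero.mpr hnp0
      field_simp
      try ring
  · -- w ≥ 1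
    have hw1' : (1:ℤ) ≤ ((w:ℕ) : ℤ) := by exact_mod_cast hw1
    have hA := entryA n p (n-p) hp hnp (by ring) ((w:ℕ):ℤ) hw1' x
    have hA' := entryA n (n-p) p hnp hp (by ring) ((w:ℕ):ℤ) hw1' x
    have hB := entryB n p (n-p) hp hnp (by ring) ((w:ℕ):ℤ) hw1' x
    have hB' := entryB n (n-p) p hnp hp (by ring) ((w:ℕ):ℤ) hw1' x
    ext i j
    fin_cases i <;> fin_cases j
    · -- (0,0)
      simp [Pw, PwZ_eq, Matrix.mul_apply, Fin.sum_univ_two, smul_eq_mul]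
      simp only [show ((w:ℤ))-1-1 = (w:ℤ)-2 from by ring, show ((w:ℤ))-1-2 = (w:ℤ)-3 from by ring]
      push_cast
      try simp only [show ((w:ℤ))+1-1 = (w:ℤ) from by ring, show ((w:ℤ))+1-2 = (w:ℤ)-1 from by ring]
      have H := congrArg (fun t : ℝ => (t : ℂ)) hA
      push_cast at H
      linear_combination H
    · -- (0,1)
      simp [Pw, PwZ_eq, Matrix.mul_apply, Fin.sum_univ_two, smul_eq_mul]
      simp only [show ((w:ℤ))-1-1 = (w:ℤ)-2 from by ring, show ((w:ℤ))-1-2 = (w:ℤ)-3 from by ring]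
      push_cast
      try simp only [show ((w:ℤ))+1-1 = (w:ℤ) from by ring, show ((w:ℤ))+1-2 = (w:ℤ)-1 from by ring]
      have H := congrArg (fun t : ℝ => (t : ℂ)) hB
      push_cast at H
      linear_combination H
    · -- (1,0)
      simp [Pw, PwZ_eq, Matrix.mul_apply, Fin.sum_univ_two, smul_eq_mul]
      simp only [show ((w:ℤ))-1-1 = (w:ℤ)-2 from by ring, show ((w:ℤ))-1-2 = (w:ℤ)-3 from by ring]
      push_cast
      try simp only [show ((w:ℤ))+1-1 = (w:ℤ) from by ring, show ((w:ℤ))+1-2 = (w:ℤ)-1 from by ring]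
      have H := congrArg (fun t : ℝ => (t : ℂ)) hB'
      push_cast at H
      linear_combination H
    · -- (1,1)
      simp [Pw, PwZ_eq, Matrix.mul_apply, Fin.sum_univ_two, smul_eq_mul]
      simp only [show ((w:ℤ))-1-1 = (w:ℤ)-2 from by ring, show ((w:ℤ))-1-2 = (w:ℤ)-3 from by ring]
      push_cast
      try simp only [show ((w:ℤ))+1-1 = (w:ℤ) from by ring, show ((w:ℤ))+1-2 = (w:ℤ)-1 from by ring]
      have H := congrArg (fun t : ℝ => (t : ℂ)) hA'
      push_cast at H
      linear_combination H

end
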